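/- Fix a real number β > 0 and let ν_β be the measure on ℝ with density f(x) = √(4β − (1−x)²)/(2βπ) on [1−2√β, 1+2√β] and zero elsewhere. Then ν_β is a probability measure, and for every real ξ > 1 + 2√β its Cauchy transform Γ(ξ) = ∫ (ξ − x)⁻¹ dν_β(x) satisfies the quadratic equation β Γ(ξ)² + (1 − ξ) Γ(ξ) + 1 = 0; explicitly, Γ(ξ) = (ξ − 1 − √((ξ−1)² − 4β))/(2β). -/

import Mathlib

open MeasureTheory

/-- The semicircle law `SC(1,β)` centered at `1` of variance `β`: the measure on `ℝ` with
density `√(4β − (1−x)²)/(2βπ)` on `[1 − 2√β, 1 + 2√β]` and zero elsewhere. -/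
noncomputable def semicircleLaw (β : ℝ) : Measure ℝ :=
  volume.withDensity fun x => ENNReal.ofReal
    (Set.indicator (Set.Icc (1 - 2 * Real.sqrt β) (1 + 2 * Real.sqrt β))
      (fun x => Real.sqrt (4 * β - (1 - x) ^ 2) / (2 * β * Real.pi)) x)

open Real Set
open scoped NNReal ENNReal

-- abbreviations
lemma sc_density_cont (β : ℝ) :
    Continuous (fun x : ℝ => Real.sqrt (4 * β - (1 - x) ^ 2) / (2 * β * Real.pi)) :=
  (Real.continuous_sqrt.comp (by continuity)).div_const _

lemma sc_density_nonneg (β : ℝ) (x : ℝ) (hβ : 0 < β) :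
    0 ≤ Real.sqrt (4 * β - (1 - x) ^ 2) / (2 * β * Real.pi) := by
  apply div_nonneg (Real.sqrt_nonneg _)
  positivity

/-- reduction of integrals against the semicircle law to interval integrals -/
lemma sc_integral (β : ℝ) (hβ : 0 < β) (k : ℝ → ℝ) (hk : Measurable k) :
    ∫ x, k x ∂(semicircleLaw β)
      = ∫ t in (1 - 2 * Real.sqrt β)..(1 + 2 * Real.sqrt β),
          Real.sqrt (4 * β - (1 - t) ^ 2) / (2 * β * Real.pi) * k t := by
  set g : ℝ → ℝ := fun x => Real.sqrt (4 * β - (1 - x) ^ 2) / (2 * β * Real.pi) with hg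
  set l : ℝ := 1 - 2 * Real.sqrt β
  set r : ℝ := 1 + 2 * Real.sqrt β
  have hlr : l ≤ r := by
    have : 0 ≤ Real.sqrt β := Real.sqrt_nonneg β
    simp only [l, r]; linarith
  set d : ℝ → ℝ := Set.indicator (Set.Icc l r) g with hd
  have hd_meas : Measurable d :=
    ((sc_density_cont β).measurable).indicator measurableSet_Icc
  have hd_nn : ∀ x, 0 ≤ d x := fun x =>
    Set.indicator_nonneg (fun y _ => sc_density_nonneg β y hβ) x
  have h1 : (semicircleLaw β) = volume.withDensity fun x =>
      (((fun x => (d x).toNNReal) x : ℝ≥0) : ℝ≥0∞) := rfl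
  rw [h1, integral_withDensity_eq_integral_smul hd_meas.real_toNNReal k]
  have h2 : ∀ x, ((d x).toNNReal : ℝ≥0) • k x
      = Set.indicator (Set.Icc l r) (fun x => g x * k x) x := by
    intro x
    rw [NNReal.smul_def, Real.coe_toNNReal _ (hd_nn x), smul_eq_mul, hd]
    exact (Set.indicator_mul_left (Icc l r) g k).symm
  simp only [h2]
  rw [integral_indicator measurableSet_Icc, integral_Icc_eq_integral_Ioc,
    ← intervalIntegral.integral_of_le hlr]

lemma sc_sub_lemma (β : ℝ) (hβ : 0 < β) (F : ℝ → ℝ) :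
    ∫ t in (1 - 2 * Real.sqrt β)..(1 + 2 * Real.sqrt β), F t
      = (2 * Real.sqrt β) * ∫ x in (-1:ℝ)..1, F (2 * Real.sqrt β * x + 1) := by
  have hs : (0:ℝ) < Real.sqrt β := Real.sqrt_pos.2 hβ
  rw [intervalIntegral.integral_comp_mul_add F (by positivity) 1,
    show (2 * Real.sqrt β * (-1) + 1 : ℝ) = 1 - 2 * Real.sqrt β by ring,
    show (2 * Real.sqrt β * 1 + 1 : ℝ) = 1 + 2 * Real.sqrt β by ring,
    smul_eq_mul, ← mul_assoc, mul_inv_cancel₀ (by positivity), one_mul]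

lemma sc_g_transform (β : ℝ) (hβ : 0 < β) (x : ℝ) :
    Real.sqrt (4 * β - (1 - (2 * Real.sqrt β * x + 1)) ^ 2) / (2 * β * Real.pi)
      = Real.sqrt β * Real.sqrt (1 - x ^ 2) / (β * Real.pi) := by
  have hs2 : Real.sqrt β ^ 2 = β := Real.sq_sqrt hβ.le
  have h1 : 4 * β - (1 - (2 * Real.sqrt β * x + 1)) ^ 2
      = (2 * Real.sqrt β) ^ 2 * (1 - x ^ 2) := by rw [mul_pow]; nlinarith
  rw [h1, Real.sqrt_mul (by positivity), Real.sqrt_sq (by positivity)]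
  have : (0:ℝ) < Real.pi := Real.pi_pos
  field_simp

lemma key_integral {a : ℝ} (ha : 1 < a) :
    ∫ x in (-1:ℝ)..1, Real.sqrt (1 - x ^ 2) / (a - x)
      = Real.pi * (a - Real.sqrt (a ^ 2 - 1)) := by
  have ha2 : (0:ℝ) < a ^ 2 - 1 := by nlinarith
  set q := Real.sqrt (a ^ 2 - 1) with hq
  have hq2 : q ^ 2 = a ^ 2 - 1 := Real.sq_sqrt ha2.le
  have hqpos : 0 < q := Real.sqrt_pos.2 ha2
  set F : ℝ → ℝ := fun x =>
    -Real.sqrt (1 - x ^ 2) + a * Real.arcsin x - q * Real.arcsin ((a * x - 1) / (a - x))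
    with hF
  have haxIcc : ∀ x ∈ Icc (-1:ℝ) 1, (0:ℝ) < a - x := fun x hx => by
    have := hx.2; linarith
  have hcont : ContinuousOn F (Icc (-1:ℝ) 1) := by
    apply ContinuousOn.sub
    · apply ContinuousOn.add
      · exact ((Real.continuous_sqrt.comp (by continuity)).continuousOn).neg
      · exact continuousOn_const.mul Real.continuous_arcsin.continuousOn
    · apply ContinuousOn.mul continuousOn_const
      apply Real.continuous_arcsin.comp_continuousOn
      exact ContinuousOn.div (by fun_prop) (by fun_prop)
        (fun x hx => (haxIcc x hx).ne')
  have hderiv : ∀ x ∈ Ioo (-1:ℝ) 1,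
      HasDerivAt F (Real.sqrt (1 - x ^ 2) / (a - x)) x := by
    intro x hx
    obtain ⟨hx1, hx2⟩ := hx
    have h1x : (0:ℝ) < 1 - x ^ 2 := by nlinarith
    have hp : (0:ℝ) < Real.sqrt (1 - x ^ 2) := Real.sqrt_pos.2 h1x
    have hp2 : Real.sqrt (1 - x ^ 2) ^ 2 = 1 - x ^ 2 := Real.sq_sqrt h1x.le
    have hax : (0:ℝ) < a - x := by linarith
    -- derivative of -sqrt(1-x^2)
    have d1 : HasDerivAt (fun y : ℝ => -Real.sqrt (1 - y ^ 2))
        (x / Real.sqrt (1 - x ^ 2)) x := by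
      have hinner : HasDerivAt (fun y : ℝ => 1 - y ^ 2) (-(2 * x)) x := by
        simpa using ((hasDerivAt_pow 2 x).const_sub 1)
      have := (hinner.sqrt h1x.ne').neg
      refine this.congr_deriv ?_
      field_simp
    -- derivative of a * arcsin
    have d2 : HasDerivAt (fun y : ℝ => a * Real.arcsin y)
        (a * (1 / Real.sqrt (1 - x ^ 2))) x :=
      (Real.hasDerivAt_arcsin hx1.ne' hx2.ne).const_mul a
    -- derivative of the u term
    have hu2lt : (a * x - 1) / (a - x) < 1 := by
      rw [div_lt_one hax]; nlinarith
    have hu1lt : (-1:ℝ) < (a * x - 1) / (a - x) := by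
      rw [lt_div_iff₀ hax]; nlinarith
    have du : HasDerivAt (fun y : ℝ => (a * y - 1) / (a - y))
        ((a ^ 2 - 1) / (a - x) ^ 2) x := by
      have hnum : HasDerivAt (fun y : ℝ => a * y - 1) a x := by
        simpa using ((hasDerivAt_id x).const_mul a).sub_const 1
      have hden : HasDerivAt (fun y : ℝ => a - y) (-1) x := by
        simpa using (hasDerivAt_id x).const_sub a
      have := hnum.div hden hax.ne'
      refine this.congr_deriv ?_
      field_simp
      ring
    have d3 : HasDerivAt (fun y : ℝ => q * Real.arcsin ((a * y - 1) / (a - y)))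
        (q * (1 / Real.sqrt (1 - ((a * x - 1) / (a - x)) ^ 2) *
          ((a ^ 2 - 1) / (a - x) ^ 2))) x :=
      (by have h := (Real.hasDerivAt_arcsin hu1lt.ne' hu2lt.ne).comp x du; exact h.const_mul q)
    have huval : Real.sqrt (1 - ((a * x - 1) / (a - x)) ^ 2)
        = q * Real.sqrt (1 - x ^ 2) / (a - x) := by
      have h1u : 1 - ((a * x - 1) / (a - x)) ^ 2
          = ((a ^ 2 - 1) * (1 - x ^ 2)) / (a - x) ^ 2 := by
        field_simp
        ring
      rw [h1u, Real.sqrt_div (by positivity), Real.sqrt_mul ha2.le, Real.sqrt_sq hax.le]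
    have dF : HasDerivAt F (x / Real.sqrt (1 - x ^ 2) + a * (1 / Real.sqrt (1 - x ^ 2))
        - q * (1 / Real.sqrt (1 - ((a * x - 1) / (a - x)) ^ 2) *
          ((a ^ 2 - 1) / (a - x) ^ 2))) x := (d1.add d2).sub d3
    convert dF using 1
    rw [huval]
    field_simp
    linear_combination hp2
  have hint : IntervalIntegrable (fun x => Real.sqrt (1 - x ^ 2) / (a - x))
      volume (-1) 1 := by
    apply ContinuousOn.intervalIntegrable
    rw [Set.uIcc_of_le (by norm_num : (-1:ℝ) ≤ 1)]
    exact ContinuousOn.div (Real.continuous_sqrt.comp (by continuity)).continuousOn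
      (by fun_prop) (fun x hx => (haxIcc x hx).ne')
  have := intervalIntegral.integral_eq_sub_of_hasDerivAt_of_le (by norm_num : (-1:ℝ) ≤ 1)
    hcont hderiv hint
  rw [this]
  have e1 : (a * 1 - 1) / (a - 1) = 1 := by
    rw [mul_one, div_self (by linarith : a - 1 ≠ 0)]
  have e2 : (a * (-1) - 1) / (a - (-1)) = -1 := by
    rw [div_eq_iff (by linarith : a - (-1) ≠ 0)]; ring
  simp only [hF, e1, e2, Real.arcsin_one, Real.arcsin_neg_one, one_pow]
  rw [show (1:ℝ) - 1 = 0 by ring, show (1:ℝ) - (-1)^2 = 0 by ring, Real.sqrt_zero]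
  ring

lemma sc_norm (β : ℝ) (hβ : 0 < β) :
    ∫ t in (1 - 2 * Real.sqrt β)..(1 + 2 * Real.sqrt β),
      Real.sqrt (4 * β - (1 - t) ^ 2) / (2 * β * Real.pi) = 1 := by
  have hs : (0:ℝ) < Real.sqrt β := Real.sqrt_pos.2 hβ
  have hs2 : Real.sqrt β ^ 2 = β := Real.sq_sqrt hβ.le
  have hπ : (0:ℝ) < Real.pi := Real.pi_pos
  rw [sc_sub_lemma β hβ _]
  simp only [sc_g_transform β hβ]
  simp only [show ∀ x : ℝ, Real.sqrt β * Real.sqrt (1 - x ^ 2) / (β * Real.pi)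
      = (Real.sqrt β / (β * Real.pi)) * Real.sqrt (1 - x ^ 2) from fun x => by ring]
  rw [intervalIntegral.integral_const_mul, integral_sqrt_one_sub_sq]
  field_simp
  linear_combination hs2

/-- `SC(1,β)` is a probability measure and, for real `ξ > 1 + 2√β`, its Cauchy transform
`Γ(ξ) = ∫ (ξ − x)⁻¹ dν_β(x)` satisfies `βΓ² + (1 − ξ)Γ + 1 = 0`; explicitly
`Γ(ξ) = (ξ − 1 − √((ξ−1)² − 4β))/(2β)`. -/
theorem semicircleLaw_isProbability_and_cauchyTransform (β : ℝ) (hβ : 0 < β) :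
    IsProbabilityMeasure (semicircleLaw β) ∧
    ∀ ξ : ℝ, 1 + 2 * Real.sqrt β < ξ →
      β * (∫ x, (ξ - x)⁻¹ ∂(semicircleLaw β)) ^ 2
          + (1 - ξ) * (∫ x, (ξ - x)⁻¹ ∂(semicircleLaw β)) + 1 = 0 ∧
      (∫ x, (ξ - x)⁻¹ ∂(semicircleLaw β))
          = (ξ - 1 - Real.sqrt ((ξ - 1) ^ 2 - 4 * β)) / (2 * β) := by
  have hs : (0:ℝ) < Real.sqrt β := Real.sqrt_pos.2 hβ
  have hs2 : Real.sqrt β ^ 2 = β := Real.sq_sqrt hβ.le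
  have hπ : (0:ℝ) < Real.pi := Real.pi_pos
  set s : ℝ := Real.sqrt β with hsdef
  set l : ℝ := 1 - 2 * s
  set r : ℝ := 1 + 2 * s
  set g : ℝ → ℝ := fun x => Real.sqrt (4 * β - (1 - x) ^ 2) / (2 * β * Real.pi) with hg
  constructor
  · -- probability measure
    constructor
    rw [semicircleLaw, withDensity_apply _ MeasurableSet.univ, Measure.restrict_univ]
    have hd_int : Integrable (Set.indicator (Set.Icc l r) g) volume := by
      apply MeasureTheory.IntegrableOn.integrable_indicator _ measurableSet_Icc
      exact (sc_density_cont β).continuousOn.integrableOn_Icc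
    rw [← ofReal_integral_eq_lintegral_ofReal hd_int
      (ae_of_all _ (Set.indicator_nonneg (fun y _ => sc_density_nonneg β y hβ)))]
    rw [MeasureTheory.integral_indicator measurableSet_Icc, integral_Icc_eq_integral_Ioc,
      ← intervalIntegral.integral_of_le (by simp only [l, r]; linarith),
      sc_norm β hβ, ENNReal.ofReal_one]
  · intro ξ hξ
    have hξ' : 1 + 2 * s < ξ := hξ
    have hpos : (0:ℝ) < (ξ - 1) ^ 2 - 4 * β := by
      nlinarith [mul_pos (show (0:ℝ) < ξ - 1 - 2 * s by linarith)
        (show (0:ℝ) < ξ - 1 + 2 * s by linarith), hs2]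
    have ha : 1 < (ξ - 1) / (2 * s) := by
      rw [lt_div_iff₀ (by positivity)]; linarith
    set a : ℝ := (ξ - 1) / (2 * s) with hadef
    have h2sa : 2 * s * a = ξ - 1 := by
      rw [hadef]; field_simp
    clear_value a
    have hΓ : (∫ x, (ξ - x)⁻¹ ∂(semicircleLaw β))
        = (ξ - 1 - Real.sqrt ((ξ - 1) ^ 2 - 4 * β)) / (2 * β) := by
      rw [sc_integral β hβ (fun x => (ξ - x)⁻¹) (by fun_prop), sc_sub_lemma β hβ _]
      have hpt : ∀ x : ℝ,
          Real.sqrt (4 * β - (1 - (2 * s * x + 1)) ^ 2) / (2 * β * Real.pi)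
              * (ξ - (2 * s * x + 1))⁻¹
            = (2 * β * Real.pi)⁻¹ * (Real.sqrt (1 - x ^ 2) / (a - x)) := by
        intro x
        rw [sc_g_transform β hβ x,
          show ξ - (2 * s * x + 1) = 2 * s * (a - x) by rw [mul_sub, h2sa]; ring,
          mul_inv, div_eq_mul_inv, div_eq_mul_inv]
        rw [← hsdef]
        have hc : s * (β * Real.pi)⁻¹ * (2 * s)⁻¹ = (2 * β * Real.pi)⁻¹ := by
          rw [mul_inv, mul_inv, mul_inv]
          field_simp
        linear_combination (Real.sqrt (1 - x ^ 2) * (a - x)⁻¹) * hc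
      simp only [← hsdef, hpt]
      rw [intervalIntegral.integral_const_mul, key_integral ha]
      have hsq : Real.sqrt (a ^ 2 - 1) = Real.sqrt ((ξ - 1) ^ 2 - 4 * β) / (2 * s) := by
        have h1 : a ^ 2 - 1 = ((ξ - 1) ^ 2 - 4 * β) / (2 * s) ^ 2 := by
          rw [hadef]; field_simp; linear_combination (-4 : ℝ) * hs2
        rw [h1, Real.sqrt_div hpos.le _, Real.sqrt_sq (by positivity)]
      rw [hsq]
      have hstep : 2 * s * ((2 * β * Real.pi)⁻¹ *
            (Real.pi * (a - Real.sqrt ((ξ - 1) ^ 2 - 4 * β) / (2 * s))))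
          = (2 * s * a - Real.sqrt ((ξ - 1) ^ 2 - 4 * β)) / (2 * β) := by
        field_simp
      rw [hstep, h2sa]
    refine ⟨?_, hΓ⟩
    rw [hΓ]
    have hw2 : Real.sqrt ((ξ - 1) ^ 2 - 4 * β) ^ 2 = (ξ - 1) ^ 2 - 4 * β :=
      Real.sq_sqrt hpos.le
    have expand : β * ((ξ - 1 - Real.sqrt ((ξ - 1) ^ 2 - 4 * β)) / (2 * β)) ^ 2
          + (1 - ξ) * ((ξ - 1 - Real.sqrt ((ξ - 1) ^ 2 - 4 * β)) / (2 * β)) + 1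
        = (Real.sqrt ((ξ - 1) ^ 2 - 4 * β) ^ 2 - ((ξ - 1) ^ 2 - 4 * β)) / (4 * β) := by
      field_simp
      ring
    rw [expand, hw2, sub_self, zero_div]
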